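/- Let W : P × O → F × I be a one-input process function, i.e., for every function f : I → O and every p ∈ P, the equation o = f(W(p,o).2) has a unique solution o ∈ O. Then the I-component of W is independent of its second argument: for all p ∈ P and o, o' ∈ O, W(p,o).2 = W(p,o').2. -/
import Mathlib

/-- The I-component of a one-input process function is independent
of its observation argument. -/
theorem stmt_0 {P O F I : Type*} (W : P × O → F × I)
    (hW : ∀ (f : I → O) (p : P), ∃! o : O, o = f (W (p, o)).2) :
    ∀ (p : P) (o o' : O), (W (p, o)).2 = (W (p, o')).2 := by
  intro p o o'
  by_contra h
  classical
  set f : I → O := fun i => if i = (W (p, o)).2 then o else o' with hf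
  obtain ⟨x, hx, huniq⟩ := hW f p
  have h1 : o = f (W (p, o)).2 := by simp [hf]
  have h2 : o' = f (W (p, o')).2 := by
    rw [hf]; simp only []
    rw [if_neg (fun he => h he.symm)]
  have heq : o = o' := (huniq o h1).trans (huniq o' h2).symm
  exact h (heq ▸ rfl)
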